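/- Suppose S | (X,U) ~ Bernoulli(expit(b_s + β_{sx}ᵀX + β_{su}ᵀU)), and Z | (X,U,S=1) ~ Normal(β_z + B_{zu}U + B_{zx}X, Σ_z) with B_{zu} an invertible square matrix. Then the log-linear function q(Z,X) = exp(ξ₀ + ξ_zᵀZ + ξ_xᵀX) with ξ_z = −B_{zu}^{−T} β_{su}, ξ_x = −β_{sx} + B_{zx}ᵀ B_{zu}^{−T} β_{su}, ξ₀ = −b_s + β_zᵀ B_{zu}^{−T} β_{su} − (1/2) β_{su}ᵀ B_{zu}^{−1} Σ_z B_{zu}^{−T} β_{su} satisfies E[q(Z,X) | X, U, S=1] = P(S=0 | X, U)/P(S=1 | X, U) for all (X,U). -/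

import Mathlib

open MeasureTheory ProbabilityTheory Matrix

noncomputable section

/-- The expit (logistic) function. -/
def expit (t : ℝ) : ℝ := (1 + Real.exp (-t))⁻¹

lemma aux_lintegral_mul_le {Ω : Type*} {m : MeasurableSpace Ω} [m0 : MeasurableSpace Ω]
    (hm : m ≤ m0) (μ : Measure Ω) [IsFiniteMeasure μ]
    (f g E : Ω → ℝ) (hf : Measurable[m] f) (hf0 : ∀ ω, 0 ≤ f ω)
    (hgm : Measurable g) (hg0 : ∀ ω, 0 ≤ g ω) (hg : Integrable g μ)
    (hE0 : ∀ ω, 0 ≤ E ω)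
    (hE : condExp m μ g =ᵐ[μ] E) :
    ∫⁻ ω, ENNReal.ofReal (f ω * g ω) ∂μ ≤ ∫⁻ ω, ENNReal.ofReal (f ω * E ω) ∂μ := by
  haveI : IsFiniteMeasure (μ.trim hm) := isFiniteMeasure_trim hm
  have hfm0 : Measurable f := hf.mono hm le_rfl
  have key : ∀ n : ℕ,
      ∫⁻ ω, ENNReal.ofReal (min (f ω) n * g ω) ∂μ ≤ ∫⁻ ω, ENNReal.ofReal (f ω * E ω) ∂μ := by
    intro n
    have hfnm : Measurable[m] (fun ω => min (f ω) (n : ℝ)) := hf.min measurable_const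
    have hfn0 : ∀ ω, 0 ≤ min (f ω) (n : ℝ) := fun ω => le_min (hf0 ω) n.cast_nonneg
    have hfnle : ∀ ω, min (f ω) (n : ℝ) ≤ f ω := fun ω => min_le_left _ _
    have hint : Integrable ((fun ω => min (f ω) (n : ℝ)) * g) μ := by
      refine hg.bdd_mul (c := n) ((hfnm.mono hm le_rfl).aestronglyMeasurable) (Filter.Eventually.of_forall fun ω => ?_)
      rw [Real.norm_eq_abs, abs_of_nonneg (hfn0 ω)]
      exact min_le_right _ _
    have hpull : condExp m μ ((fun ω => min (f ω) (n : ℝ)) * g) =ᵐ[μ]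
        (fun ω => min (f ω) (n : ℝ)) * condExp m μ g :=
      condExp_mul_of_stronglyMeasurable_left hfnm.stronglyMeasurable hint hg
    have hfnE_eq : condExp m μ ((fun ω => min (f ω) (n : ℝ)) * g) =ᵐ[μ]
        fun ω => min (f ω) (n : ℝ) * E ω := by
      filter_upwards [hpull, hE] with ω h1 h2
      rw [h1, Pi.mul_apply, h2]
    have hfnE_int : Integrable (fun ω => min (f ω) (n : ℝ) * E ω) μ :=
      integrable_condExp.congr hfnE_eq
    have h1 : ∫ ω, min (f ω) (n : ℝ) * g ω ∂μ = ∫ ω, min (f ω) (n : ℝ) * E ω ∂μ := by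
      have h2 := integral_condExp (μ := μ) hm (f := (fun ω => min (f ω) (n : ℝ)) * g)
      rw [integral_congr_ae hfnE_eq] at h2
      exact h2.symm
    calc ∫⁻ ω, ENNReal.ofReal (min (f ω) n * g ω) ∂μ
        = ENNReal.ofReal (∫ ω, min (f ω) (n : ℝ) * g ω ∂μ) :=
          (ofReal_integral_eq_lintegral_ofReal hint
            (Filter.Eventually.of_forall fun ω => mul_nonneg (hfn0 ω) (hg0 ω))).symm
      _ = ENNReal.ofReal (∫ ω, min (f ω) (n : ℝ) * E ω ∂μ) := by rw [h1]
      _ = ∫⁻ ω, ENNReal.ofReal (min (f ω) n * E ω) ∂μ :=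
          ofReal_integral_eq_lintegral_ofReal hfnE_int
            (Filter.Eventually.of_forall fun ω => mul_nonneg (hfn0 ω) (hE0 ω))
      _ ≤ ∫⁻ ω, ENNReal.ofReal (f ω * E ω) ∂μ :=
          lintegral_mono fun ω =>
            ENNReal.ofReal_le_ofReal (mul_le_mul_of_nonneg_right (hfnle ω) (hE0 ω))
  have hsup : ∀ ω, (⨆ n : ℕ, ENNReal.ofReal (min (f ω) n * g ω)) = ENNReal.ofReal (f ω * g ω) := by
    intro ω
    refine le_antisymm (iSup_le fun n => ENNReal.ofReal_le_ofReal
      (mul_le_mul_of_nonneg_right (min_le_left _ _) (hg0 ω))) ?_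
    obtain ⟨n, hn⟩ := exists_nat_ge (f ω)
    refine le_iSup_of_le n ?_
    rw [min_eq_left hn]
  have hmct : ∫⁻ ω, ENNReal.ofReal (f ω * g ω) ∂μ
      = ⨆ n : ℕ, ∫⁻ ω, ENNReal.ofReal (min (f ω) n * g ω) ∂μ := by
    rw [← lintegral_iSup (f := fun (n : ℕ) ω => ENNReal.ofReal (min (f ω) n * g ω)) (fun n => ((hfm0.min measurable_const).mul hgm).ennreal_ofReal)
      (fun i j hij ω => ENNReal.ofReal_le_ofReal
        (mul_le_mul_of_nonneg_right (min_le_min le_rfl (by exact_mod_cast hij)) (hg0 ω)))]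
    exact lintegral_congr fun ω => (hsup ω).symm
  rw [hmct]
  exact iSup_le key

lemma aux_key {d dx : ℕ} (b_s : ℝ) (β_su β_z : Fin d → ℝ) (β_sx : Fin dx → ℝ)
    (B_zu : Matrix (Fin d) (Fin d) ℝ) (B_zx : Matrix (Fin d) (Fin dx) ℝ)
    (Sig_z : Matrix (Fin d) (Fin d) ℝ) (hBinv : IsUnit B_zu.det)
    (x : Fin dx → ℝ) (u : Fin d → ℝ) :
    (-b_s + β_z ⬝ᵥ (B_zu.transpose)⁻¹.mulVec β_su -
      (1 / 2) * (β_su ⬝ᵥ (B_zu⁻¹ * Sig_z * (B_zu.transpose)⁻¹).mulVec β_su))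
    + ((-β_sx + B_zx.transpose.mulVec ((B_zu.transpose)⁻¹.mulVec β_su)) ⬝ᵥ x)
    + (((-(B_zu.transpose)⁻¹.mulVec β_su) ⬝ᵥ (β_z + B_zu.mulVec u + B_zx.mulVec x))
       + (1/2) * ((-(B_zu.transpose)⁻¹.mulVec β_su) ⬝ᵥ Sig_z.mulVec (-(B_zu.transpose)⁻¹.mulVec β_su)))
    = -(b_s + β_sx ⬝ᵥ x + β_su ⬝ᵥ u) := by
  have hdet : IsUnit B_zuᵀ.det := by rwa [Matrix.det_transpose]
  set v := (B_zuᵀ)⁻¹.mulVec β_su with hv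
  have h1 : v ⬝ᵥ (B_zu *ᵥ u) = β_su ⬝ᵥ u := by
    rw [Matrix.dotProduct_mulVec, ← Matrix.mulVec_transpose, hv, Matrix.mulVec_mulVec,
      Matrix.mul_nonsing_inv _ hdet, Matrix.one_mulVec]
  have h2 : v ⬝ᵥ (B_zx *ᵥ x) = (B_zxᵀ *ᵥ v) ⬝ᵥ x := by
    rw [Matrix.dotProduct_mulVec, ← Matrix.mulVec_transpose]
  have h3 : v ⬝ᵥ β_z = β_z ⬝ᵥ v := dotProduct_comm _ _
  have h4 : β_su ⬝ᵥ ((B_zu⁻¹ * Sig_z * (B_zuᵀ)⁻¹) *ᵥ β_su) = v ⬝ᵥ (Sig_z *ᵥ v) := by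
    rw [← Matrix.mulVec_mulVec, ← Matrix.mulVec_mulVec, Matrix.dotProduct_mulVec β_su,
      ← Matrix.mulVec_transpose, Matrix.transpose_nonsing_inv, ← hv]
  simp only [neg_dotProduct, dotProduct_neg, dotProduct_add, mulVec_neg, neg_neg, add_dotProduct]
  rw [h1, h2, h3, h4]
  ring

/-- Closed-form trial (reweighting) bridge (Appendix C of the paper). Suppose
`S | (X,U) ~ Bernoulli(expit(b_s + β_sxᵀX + β_suᵀU))` and `Z | (X,U,S=1)` is Normal with
mean `β_z + B_zu U + B_zx X` and covariance `Sig_z` (encoded through its conditional moment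
generating function), with `B_zu` invertible. Then `q(Z,X) = exp(ξ₀ + ξ_zᵀZ + ξ_xᵀX)` with
`ξ_z = −B_zu⁻ᵀβ_su`, `ξ_x = −β_sx + B_zxᵀB_zu⁻ᵀβ_su`,
`ξ₀ = −b_s + β_zᵀB_zu⁻ᵀβ_su − (1/2)β_suᵀB_zu⁻¹Sig_zB_zu⁻ᵀβ_su`
satisfies `E[q(Z,X) | X,U,S=1] = P(S=0|X,U)/P(S=1|X,U)`. -/
theorem stmt12 {Ω : Type*} [MeasurableSpace Ω] (μ : Measure Ω) [IsProbabilityMeasure μ]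
    (d dx : ℕ)
    (U Z : Ω → (Fin d → ℝ)) (X : Ω → (Fin dx → ℝ)) (S : Ω → ℝ)
    (hU : Measurable U) (hZ : Measurable Z) (hX : Measurable X) (hS : Measurable S)
    (hSbin : ∀ ω, S ω = 0 ∨ S ω = 1)
    -- coefficients
    (b_s : ℝ) (β_su β_z : Fin d → ℝ) (β_sx : Fin dx → ℝ)
    (B_zu : Matrix (Fin d) (Fin d) ℝ) (B_zx : Matrix (Fin d) (Fin dx) ℝ)
    (Sig_z : Matrix (Fin d) (Fin d) ℝ)
    (hBinv : IsUnit B_zu.det)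
    -- `S | (X,U) ~ Bernoulli(expit(b_s + β_sxᵀX + β_suᵀU))`
    (hSmodel : condExp (MeasurableSpace.comap (fun ω => (X ω, U ω)) inferInstance) μ
        (Set.indicator {ω | S ω = 1} (fun _ => (1 : ℝ))) =ᵐ[μ]
      fun ω => expit (b_s + β_sx ⬝ᵥ X ω + β_su ⬝ᵥ U ω))
    -- conditional MGF of the Normal distribution `Z | (X,U,S=1)`
    (hMGF : ∀ t : Fin d → ℝ,
      condExp (MeasurableSpace.comap (fun ω => (X ω, U ω)) inferInstance)
          (μ[|{ω | S ω = 1}]) (fun ω => Real.exp (t ⬝ᵥ Z ω)) =ᵐ[μ[|{ω | S ω = 1}]]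
        fun ω => Real.exp
          (t ⬝ᵥ (fun i => β_z i + B_zu.mulVec (U ω) i + B_zx.mulVec (X ω) i) +
            (1 / 2) * (t ⬝ᵥ Sig_z.mulVec t)))
    -- bridge coefficients
    (ξ₀ : ℝ) (ξ_z : Fin d → ℝ) (ξ_x : Fin dx → ℝ)
    (hξ_z : ξ_z = -(B_zu.transpose)⁻¹.mulVec β_su)
    (hξ_x : ξ_x = -β_sx + B_zx.transpose.mulVec ((B_zu.transpose)⁻¹.mulVec β_su))
    (hξ₀ : ξ₀ = -b_s + β_z ⬝ᵥ (B_zu.transpose)⁻¹.mulVec β_su -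
      (1 / 2) * (β_su ⬝ᵥ (B_zu⁻¹ * Sig_z * (B_zu.transpose)⁻¹).mulVec β_su)) :
    condExp (MeasurableSpace.comap (fun ω => (X ω, U ω)) inferInstance)
        (μ[|{ω | S ω = 1}]) (fun ω => Real.exp (ξ₀ + ξ_z ⬝ᵥ Z ω + ξ_x ⬝ᵥ X ω))
        =ᵐ[μ[|{ω | S ω = 1}]]
      fun ω => (1 - expit (b_s + β_sx ⬝ᵥ X ω + β_su ⬝ᵥ U ω)) /
        expit (b_s + β_sx ⬝ᵥ X ω + β_su ⬝ᵥ U ω) := by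
  -- basic pointwise facts about `expit`
  have hexpit_pos : ∀ t : ℝ, 0 < expit t := fun t => by
    rw [expit]; positivity
  have hprod_le : ∀ t : ℝ, Real.exp (-t) * expit t ≤ 1 := by
    intro t
    have h : (0:ℝ) < 1 + Real.exp (-t) := by positivity
    rw [expit, ← div_eq_mul_inv, div_le_one h]
    linarith [Real.exp_pos (-t)]
  have hodds : ∀ t : ℝ, (1 - expit t) / expit t = Real.exp (-t) := by
    intro t
    have h : (0:ℝ) < 1 + Real.exp (-t) := by positivity
    rw [expit]
    field_simp
    ring
  -- ambient measurability facts
  have hdot : ∀ {k : ℕ} (c : Fin k → ℝ), Measurable fun v : Fin k → ℝ => c ⬝ᵥ v := by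
    intro k c
    show Measurable fun v : Fin k → ℝ => ∑ i, c i * v i
    exact Finset.measurable_sum _ fun i _ => measurable_const.mul (measurable_pi_apply i)
  have hF_meas : Measurable fun ω => Real.exp (ξ₀ + ξ_x ⬝ᵥ X ω) :=
    Real.measurable_exp.comp (measurable_const.add ((hdot ξ_x).comp hX))
  have hG_meas : Measurable fun ω => Real.exp (ξ_z ⬝ᵥ Z ω) :=
    Real.measurable_exp.comp ((hdot ξ_z).comp hZ)
  have hs_meas : MeasurableSet {ω | S ω = 1} := hS (measurableSet_singleton 1)
  have hind_meas : Measurable (Set.indicator {ω | S ω = 1} (fun _ => (1:ℝ))) :=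
    measurable_const.indicator hs_meas
  -- the sub-σ-algebra
  have hm : MeasurableSpace.comap (fun ω => (X ω, U ω)) inferInstance ≤ ‹MeasurableSpace Ω› :=
    (hX.prodMk hU).comap_le
  have hpair : Measurable[MeasurableSpace.comap (fun ω => (X ω, U ω)) inferInstance]
      (fun ω => (X ω, U ω)) := Measurable.of_comap_le le_rfl
  have hX_m : Measurable[MeasurableSpace.comap (fun ω => (X ω, U ω)) inferInstance] X :=
    (measurable_fst.comp hpair : _)
  have hU_m : Measurable[MeasurableSpace.comap (fun ω => (X ω, U ω)) inferInstance] U :=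
    (measurable_snd.comp hpair : _)
  have hF_m : Measurable[MeasurableSpace.comap (fun ω => (X ω, U ω)) inferInstance]
      fun ω => Real.exp (ξ₀ + ξ_x ⬝ᵥ X ω) :=
    Real.measurable_exp.comp (measurable_const.add ((hdot ξ_x).comp hX_m))
  have hℓexp_m : Measurable[MeasurableSpace.comap (fun ω => (X ω, U ω)) inferInstance]
      fun ω => Real.exp (-(b_s + β_sx ⬝ᵥ X ω + β_su ⬝ᵥ U ω)) :=
    Real.measurable_exp.comp
      (((measurable_const.add ((hdot β_sx).comp hX_m)).add ((hdot β_su).comp hU_m)).neg)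
  -- the conditioning set
  set s : Set Ω := {ω | S ω = 1} with hsdef
  by_cases hzero : μ s = 0
  · rw [ProbabilityTheory.cond_eq_zero_of_meas_eq_zero hzero]
    simp [Filter.EventuallyEq, ae_zero]
  -- main case
  haveI hprob : IsProbabilityMeasure (μ[|s]) := cond_isProbabilityMeasure hzero
  -- the key algebraic identity
  have hFE : ∀ ω, Real.exp (ξ₀ + ξ_x ⬝ᵥ X ω) *
      Real.exp (ξ_z ⬝ᵥ (fun i => β_z i + B_zu.mulVec (U ω) i + B_zx.mulVec (X ω) i) +
        (1 / 2) * (ξ_z ⬝ᵥ Sig_z.mulVec ξ_z)) =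
      Real.exp (-(b_s + β_sx ⬝ᵥ X ω + β_su ⬝ᵥ U ω)) := by
    intro ω
    rw [← Real.exp_add]
    congr 1
    have hfun : (fun i => β_z i + B_zu.mulVec (U ω) i + B_zx.mulVec (X ω) i)
        = β_z + B_zu.mulVec (U ω) + B_zx.mulVec (X ω) := rfl
    rw [hfun, hξ_z, hξ_x, hξ₀]
    have hk := aux_key b_s β_su β_z β_sx B_zu B_zx Sig_z hBinv (X ω) (U ω)
    linarith [hk]
  -- integrability of the exponential of the bridge
  have hG_int : Integrable (fun ω => Real.exp (ξ_z ⬝ᵥ Z ω)) (μ[|s]) := by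
    by_contra hni
    have h0 : condExp (MeasurableSpace.comap (fun ω => (X ω, U ω)) inferInstance) (μ[|s])
        (fun ω => Real.exp (ξ_z ⬝ᵥ Z ω)) = 0 := condExp_of_not_integrable hni
    have hmg := hMGF ξ_z
    rw [h0] at hmg
    haveI : (ae (μ[|s])).NeBot := ae_neBot.mpr (IsProbabilityMeasure.ne_zero _)
    obtain ⟨ω, hω⟩ := hmg.exists
    exact Real.exp_ne_zero _ hω.symm
  -- step 1 : the μ-level bound
  have hind_int : Integrable (Set.indicator s (fun _ => (1:ℝ))) μ :=
    (integrable_const (1:ℝ)).indicator hs_meas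
  have hind0 : ∀ ω, 0 ≤ Set.indicator s (fun _ => (1:ℝ)) ω :=
    fun ω => Set.indicator_nonneg (fun _ _ => zero_le_one) ω
  have hstep1 : ∫⁻ ω, ENNReal.ofReal (Real.exp (-(b_s + β_sx ⬝ᵥ X ω + β_su ⬝ᵥ U ω)) *
      Set.indicator s (fun _ => (1:ℝ)) ω) ∂μ ≤ 1 := by
    refine le_trans (aux_lintegral_mul_le hm μ _ _ _ hℓexp_m (fun ω => (Real.exp_pos _).le)
      hind_meas hind0 hind_int (fun ω => (hexpit_pos _).le) hSmodel) ?_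
    calc ∫⁻ ω, ENNReal.ofReal (Real.exp (-(b_s + β_sx ⬝ᵥ X ω + β_su ⬝ᵥ U ω)) *
          expit (b_s + β_sx ⬝ᵥ X ω + β_su ⬝ᵥ U ω)) ∂μ
        ≤ ∫⁻ _, 1 ∂μ := lintegral_mono fun ω => ENNReal.ofReal_le_one.mpr (hprod_le _)
      _ = 1 := by simp
  -- step 2 : integrability of the product under the conditional measure
  have hFG_lint : ∫⁻ ω, ENNReal.ofReal (Real.exp (ξ₀ + ξ_x ⬝ᵥ X ω) *
      Real.exp (ξ_z ⬝ᵥ Z ω)) ∂(μ[|s]) < ⊤ := by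
    have hb := aux_lintegral_mul_le hm (μ[|s]) _ _ _ hF_m (fun ω => (Real.exp_pos _).le)
      hG_meas (fun ω => (Real.exp_pos _).le) hG_int (fun ω => (Real.exp_pos _).le) (hMGF ξ_z)
    refine lt_of_le_of_lt hb ?_
    have hEq : ∫⁻ ω, ENNReal.ofReal (Real.exp (ξ₀ + ξ_x ⬝ᵥ X ω) *
        Real.exp (ξ_z ⬝ᵥ (fun i => β_z i + B_zu.mulVec (U ω) i + B_zx.mulVec (X ω) i) +
          (1 / 2) * (ξ_z ⬝ᵥ Sig_z.mulVec ξ_z))) ∂(μ[|s])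
        = ∫⁻ ω, ENNReal.ofReal (Real.exp (-(b_s + β_sx ⬝ᵥ X ω + β_su ⬝ᵥ U ω))) ∂(μ[|s]) :=
      lintegral_congr fun ω => by rw [hFE ω]
    rw [hEq]
    have hrw : ∀ ω, ENNReal.ofReal (Real.exp (-(b_s + β_sx ⬝ᵥ X ω + β_su ⬝ᵥ U ω)) *
        Set.indicator s (fun _ => (1:ℝ)) ω)
        = Set.indicator s (fun ω => ENNReal.ofReal
            (Real.exp (-(b_s + β_sx ⬝ᵥ X ω + β_su ⬝ᵥ U ω)))) ω := by
      intro ω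
      by_cases hω : ω ∈ s
      · simp [hω]
      · simp [hω]
    have hres : ∫⁻ ω, ENNReal.ofReal (Real.exp (-(b_s + β_sx ⬝ᵥ X ω + β_su ⬝ᵥ U ω)))
        ∂(μ.restrict s) ≤ 1 := by
      rw [← lintegral_indicator hs_meas]
      refine le_trans (le_of_eq (lintegral_congr fun ω => (hrw ω).symm)) hstep1
    calc ∫⁻ ω, ENNReal.ofReal (Real.exp (-(b_s + β_sx ⬝ᵥ X ω + β_su ⬝ᵥ U ω))) ∂(μ[|s])
        = (μ s)⁻¹ * ∫⁻ ω, ENNReal.ofReal (Real.exp (-(b_s + β_sx ⬝ᵥ X ω + β_su ⬝ᵥ U ω)))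
            ∂(μ.restrict s) := by
          rw [ProbabilityTheory.cond, lintegral_smul_measure, smul_eq_mul]
      _ ≤ (μ s)⁻¹ * 1 := by
          exact mul_le_mul_right hres _
      _ < ⊤ := by
          rw [mul_one]
          exact ENNReal.inv_lt_top.mpr (pos_iff_ne_zero.mpr hzero)
  have hFG_int : Integrable ((fun ω => Real.exp (ξ₀ + ξ_x ⬝ᵥ X ω)) *
      (fun ω => Real.exp (ξ_z ⬝ᵥ Z ω))) (μ[|s]) := by
    refine ⟨(hF_meas.mul hG_meas).aestronglyMeasurable, ?_⟩
    rw [hasFiniteIntegral_iff_norm]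
    refine lt_of_le_of_lt (le_of_eq (lintegral_congr fun ω => ?_)) hFG_lint
    rw [Pi.mul_apply, Real.norm_of_nonneg (by positivity)]
  -- conclusion
  have hq : (fun ω => Real.exp (ξ₀ + ξ_z ⬝ᵥ Z ω + ξ_x ⬝ᵥ X ω))
      = (fun ω => Real.exp (ξ₀ + ξ_x ⬝ᵥ X ω)) * (fun ω => Real.exp (ξ_z ⬝ᵥ Z ω)) := by
    funext ω
    rw [Pi.mul_apply, ← Real.exp_add]
    congr 1
    ring
  rw [hq]
  refine (condExp_mul_of_stronglyMeasurable_left hF_m.stronglyMeasurable hFG_int hG_int).trans ?_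
  filter_upwards [hMGF ξ_z] with ω hω
  rw [Pi.mul_apply, hω, hFE ω, ← hodds]
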